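/- arXiv:1809.05750 — 3 statements merged into one kernel-verified Lean document; each statement's English description precedes it below -/
import Mathlib

section
/- Let b be a positive integer, a an integer, and g₁ an odd positive integer. Then there exist integers m, n, t with gcd(t, b) = 1, gcd(m, 2n) = 1, gcd(m, b) = 1, and m^{g₁} - n² ≡ t²·a (mod b). -/
/-- For any positive modulus `b`, integer `a`, and odd positive exponent `g₁`,
there exist integers `m, n, t` with `gcd(t,b) = 1`, `gcd(m,2n) = 1`, `gcd(m,b) = 1`
and `m^g₁ - n² ≡ t²·a (mod b)`. -/
theorem stmt_3 (b : ℕ) (hb : 0 < b) (a : ℤ) (g₁ : ℕ) (hg₁ : 0 < g₁) (hodd : Odd g₁) :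
    ∃ m n t : ℤ, Int.gcd t (b : ℤ) = 1 ∧ Int.gcd m (2 * n) = 1 ∧
      Int.gcd m (b : ℤ) = 1 ∧ m ^ g₁ - n ^ 2 ≡ t ^ 2 * a [ZMOD (b : ℤ)] := by
  classical
  set S := b.primeFactors.filter (fun p : ℕ => ¬ ((p:ℤ) ∣ a)) with hS
  set X : ℕ := (∏ p ∈ S, p) with hX
  set x : ℤ := (X : ℤ) with hx
  set u : ℤ := x ^ 2 + a with hu
  have hcop : IsCoprime u (b:ℤ) := by
    rw [Int.isCoprime_iff_gcd_eq_one]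
    by_contra hg
    have hg0 : Int.gcd u (b:ℤ) ≠ 0 := by
      intro h0
      have hb' : (b:ℤ) ≠ 0 := by exact_mod_cast hb.ne'
      exact hb' (Int.gcd_eq_zero_iff.mp h0).2
    set g := Int.gcd u (b:ℤ) with hgdef
    have hp := Nat.minFac_prime (show g ≠ 1 from hg)
    set p := g.minFac with hpdef
    have hpu : (p:ℤ) ∣ u := dvd_trans (Int.natCast_dvd_natCast.mpr (Nat.minFac_dvd g)) (Int.gcd_dvd_left u (b:ℤ))
    have hpb : p ∣ b := by
      have h1 : (p:ℤ) ∣ (b:ℤ) := dvd_trans (Int.natCast_dvd_natCast.mpr (Nat.minFac_dvd g)) (Int.gcd_dvd_right u (b:ℤ))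
      exact_mod_cast h1
    by_cases hpa : (p:ℤ) ∣ a
    · have hpx2 : (p:ℤ) ∣ x ^ 2 := by
        have := dvd_sub hpu hpa
        simpa [hu] using this
      have hpx : (p:ℤ) ∣ x := (Nat.prime_iff_prime_int.mp hp).dvd_of_dvd_pow hpx2
      have hpX : p ∣ X := by
        rw [hx] at hpx
        exact_mod_cast hpx
      obtain ⟨q, hqS, hpq⟩ := (Nat.Prime.prime hp).exists_mem_finset_dvd (by simpa [hX] using hpX)
      have hq : q.Prime := Nat.prime_of_mem_primeFactors (Finset.mem_filter.mp hqS).1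
      have : p = q := (Nat.prime_dvd_prime_iff_eq hp hq).mp hpq
      exact (Finset.mem_filter.mp hqS).2 (this ▸ hpa)
    · have hpS : p ∈ S := Finset.mem_filter.mpr ⟨Nat.mem_primeFactors.mpr ⟨hp, hpb, hb.ne'⟩, hpa⟩
      have hpX : p ∣ X := by simpa using Finset.dvd_prod_of_mem (fun p => p) hpS
      have hpx : (p:ℤ) ∣ x := by
        rw [hx]
        exact_mod_cast hpX
      have : (p:ℤ) ∣ a := by
        have h2 : (p:ℤ) ∣ x ^ 2 := Dvd.dvd.pow hpx (by norm_num)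
        have := dvd_sub hpu h2
        simpa [hu] using this
      exact hpa this
  obtain ⟨c, d, hcd⟩ := hcop
  obtain ⟨m, k, hmodd, hmk⟩ : ∃ m k : ℤ, Odd m ∧ m = c + (b:ℤ) * k := by
    rcases Int.even_or_odd c with hc | hc
    · rcases Nat.even_or_odd b with hbe | hbo
      · exfalso
        have hbe' : Even (b:ℤ) := by exact_mod_cast hbe
        have : Even (1:ℤ) := by
          rw [← hcd]
          exact (hc.mul_right u).add (hbe'.mul_left d)
        norm_num at this
      · refine ⟨c + b, 1, ?_, by ring⟩
        have : Odd (b:ℤ) := by exact_mod_cast hbo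
        exact Even.add_odd hc this
    · exact ⟨c, 0, hc, by ring⟩
  have hmu : ∃ w : ℤ, m * u - 1 = (b:ℤ) * w := by
    refine ⟨k * u - d, ?_⟩
    rw [hmk]; linear_combination hcd
  have hmb : IsCoprime m (b:ℤ) := ⟨u, d - k * u, by rw [hmk]; linear_combination hcd⟩
  set e := (g₁ + 1) / 2 with hedef
  have he : e * 2 = g₁ + 1 := by
    obtain ⟨j, hj⟩ := hodd
    omega
  set t := m ^ e with ht
  obtain ⟨p', q', hpq⟩ := hmb.symm
  set n := 1 + m * (q' * (t * x - 1)) with hn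
  have hnm : ∃ w : ℤ, n - t * x = (b:ℤ) * w := by
    refine ⟨(1 - t * x) * p', ?_⟩
    rw [hn]; linear_combination (t * x - 1) * hpq
  refine ⟨m, n, t, ?_, ?_, ?_, ?_⟩
  · exact Int.isCoprime_iff_gcd_eq_one.mp (hmb.pow_left)
  · rw [← Int.isCoprime_iff_gcd_eq_one]
    have hm2 : IsCoprime m (2:ℤ) := by
      obtain ⟨j, hj⟩ := hmodd
      exact ⟨1, -j, by rw [hj]; ring⟩
    have hmn : IsCoprime m n := ⟨-(q' * (t * x - 1)), 1, by rw [hn]; ring⟩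
    exact hm2.mul_right hmn
  · exact Int.isCoprime_iff_gcd_eq_one.mp hmb
  · rw [Int.modEq_iff_dvd]
    have h1 : (b:ℤ) ∣ t ^ 2 * u - m ^ g₁ := by
      obtain ⟨w, hw⟩ := hmu
      refine ⟨m ^ g₁ * w, ?_⟩
      have ht2 : t ^ 2 = m ^ g₁ * m := by rw [ht, ← pow_mul, he, pow_succ]
      rw [ht2]; linear_combination m ^ g₁ * hw
    have h2 : (b:ℤ) ∣ n ^ 2 - (t * x) ^ 2 := by
      obtain ⟨w, hw⟩ := hnm
      exact ⟨(n + t * x) * w, by linear_combination (n + t * x) * hw⟩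
    have key : t ^ 2 * a - (m ^ g₁ - n ^ 2) = (t ^ 2 * u - m ^ g₁) + (n ^ 2 - (t * x) ^ 2) := by
      rw [hu]; ring
    rw [key]
    exact dvd_add h1 h2
end

section
/- Let m be an integer and t a positive odd squarefree-friendly integer coprime to 2m. Then φ_m(t²) = Σ_{d | t} μ²(d)·(m/d), where (m/d) denotes the Jacobi symbol and φ_m(t²) is the number of n mod t² with n² ≡ m (mod t²). -/
open ArithmeticFunction Finset

lemma dvd_of_sq_eq {n : ℕ} [NeZero n] {x : ZMod n} {m : ℤ} (h : x ^ 2 = (m : ZMod n)) :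
    (n : ℤ) ∣ ((x.val : ℤ) ^ 2 - m) := by
  rw [← ZMod.intCast_zmod_eq_zero_iff_dvd]
  push_cast
  rw [ZMod.natCast_val, ZMod.cast_id, h, sub_self]

lemma card_sq_mul (m : ℤ) {a b : ℕ} (hab : a.Coprime b) :
    Nat.card {x : ZMod (a * b) // x ^ 2 = (m : ZMod (a * b))} =
      Nat.card {x : ZMod a // x ^ 2 = (m : ZMod a)} *
        Nat.card {x : ZMod b // x ^ 2 = (m : ZMod b)} := by
  rw [← Nat.card_prod]
  apply Nat.card_congr
  refine (Equiv.subtypeEquiv (ZMod.chineseRemainder hab).toEquiv fun x => ?_).trans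
    (Equiv.subtypeProdEquivProd (p := fun y : ZMod a => y ^ 2 = (m : ZMod a))
      (q := fun z : ZMod b => z ^ 2 = (m : ZMod b)))
  set e := ZMod.chineseRemainder hab
  constructor
  · intro h
    have : e (x ^ 2) = e ((m : ZMod (a * b))) := by rw [h]
    rw [map_pow, map_intCast] at this
    constructor
    · simpa using congrArg Prod.fst this
    · simpa using congrArg Prod.snd this
  · rintro ⟨h1, h2⟩
    apply e.injective
    rw [map_pow, map_intCast]
    exact Prod.ext (by simpa using h1) (by simpa using h2)

lemma hensel_step {p : ℕ} (hp : p.Prime) (hp2 : p ≠ 2) {m : ℤ} (hm : ¬(p : ℤ) ∣ m)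
    {k : ℕ} (hk : 1 ≤ k) :
    Nat.card {x : ZMod (p ^ (k + 1)) // x ^ 2 = (m : ZMod (p ^ (k + 1)))} =
      Nat.card {x : ZMod (p ^ k) // x ^ 2 = (m : ZMod (p ^ k))} := by
  haveI : NeZero (p ^ (k + 1)) := ⟨pow_ne_zero _ hp.pos.ne'⟩
  haveI : NeZero (p ^ k) := ⟨pow_ne_zero _ hp.pos.ne'⟩
  obtain ⟨j, rfl⟩ : ∃ j, k = j + 1 := ⟨k - 1, by omega⟩
  set k := j + 1 with hkdef
  have hpz : Prime (p : ℤ) := Nat.prime_iff_prime_int.mp hp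
  have hp2' : ¬(p : ℤ) ∣ 2 := fun h => hp2
    ((Nat.prime_dvd_prime_iff_eq hp Nat.prime_two).mp
      (Int.natCast_dvd_natCast.mp (by exact_mod_cast h)))
  let r : ZMod (p ^ (k + 1)) →+* ZMod (p ^ k) :=
    ZMod.castHom (pow_dvd_pow p (Nat.le_succ k)) _
  have hr : ∀ x : ZMod (p ^ (k + 1)), r x = ((x.val : ℤ) : ZMod (p ^ k)) := by
    intro x
    push_cast
    rw [ZMod.castHom_apply, ← ZMod.natCast_val]
  let f : {x : ZMod (p ^ (k + 1)) // x ^ 2 = (m : ZMod (p ^ (k + 1)))} →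
      {x : ZMod (p ^ k) // x ^ 2 = (m : ZMod (p ^ k))} :=
    fun x => ⟨r x.1, by rw [← map_pow, x.2, map_intCast]⟩
  apply Nat.card_eq_of_bijective f
  constructor
  · rintro ⟨x, hx⟩ ⟨y, hy⟩ hxy
    have h1 : ((p : ℤ)) ^ (k + 1) ∣ (x.val : ℤ) ^ 2 - m := by
      have := dvd_of_sq_eq hx; push_cast at this; exact this
    have h2 : ((p : ℤ)) ^ (k + 1) ∣ (y.val : ℤ) ^ 2 - m := by
      have := dvd_of_sq_eq hy; push_cast at this; exact this
    have h3 : ((p : ℤ)) ^ k ∣ (x.val : ℤ) - (y.val : ℤ) := by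
      have : r x = r y := congrArg Subtype.val hxy
      rw [hr, hr] at this
      have := sub_eq_zero.mpr this
      rw [← Int.cast_sub, ZMod.intCast_zmod_eq_zero_iff_dvd] at this
      push_cast at this; exact this
    set a := (x.val : ℤ); set b := (y.val : ℤ)
    obtain ⟨c, hc⟩ := h3
    have h4 : (p : ℤ) ^ (k + 1) ∣ (a - b) * (a + b) := by
      have := dvd_sub h1 h2
      have heq : (a ^ 2 - m) - (b ^ 2 - m) = (a - b) * (a + b) := by ring
      rwa [heq] at this
    rw [hc] at h4
    have h5 : (p : ℤ) ∣ c * (a + b) := by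
      rcases h4 with ⟨d, hd⟩
      refine ⟨d, ?_⟩
      have hpk : ((p : ℤ)) ^ k ≠ 0 := pow_ne_zero _ (by exact_mod_cast hp.pos.ne')
      apply mul_left_cancel₀ hpk
      linear_combination hd
    have h6 : ¬ (p : ℤ) ∣ (a + b) := by
      intro hab
      have hpab : (p : ℤ) ∣ a - b := (dvd_pow_self _ (by omega : k ≠ 0)).trans ⟨c, hc⟩
      have h2a : (p : ℤ) ∣ 2 * a := by
        have := dvd_add hab hpab
        have heq : (a + b) + (a - b) = 2 * a := by ring
        rwa [heq] at this
      have hpa : (p : ℤ) ∣ a := (hpz.dvd_mul.mp h2a).resolve_left hp2'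
      have : (p : ℤ) ∣ m := by
        have hpa2 : (p : ℤ) ∣ a ^ 2 := by rw [sq]; exact hpa.mul_left a
        have h1' : (p : ℤ) ∣ a ^ 2 - m := (dvd_pow_self (p:ℤ) (by omega : k + 1 ≠ 0)).trans h1
        have := dvd_sub hpa2 h1'
        simpa using this
      exact hm this
    have hpc : (p : ℤ) ∣ c := (hpz.dvd_mul.mp h5).resolve_right h6
    have : (p : ℤ) ^ (k + 1) ∣ a - b := by
      rcases hpc with ⟨e, he⟩
      exact ⟨e, by rw [hc, he, pow_succ]; ring⟩
    have h8 : (((x.val : ℤ) - (y.val : ℤ) : ℤ) : ZMod (p ^ (k + 1))) = 0 := by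
      rw [ZMod.intCast_zmod_eq_zero_iff_dvd, Nat.cast_pow]
      exact this
    apply Subtype.ext
    show x = y
    rw [Int.cast_sub] at h8
    have h9 := sub_eq_zero.mp h8
    push_cast at h9
    simpa [ZMod.natCast_val, ZMod.cast_id] using h9
  · rintro ⟨y, hy⟩
    set b := (y.val : ℤ) with hb
    have h2 : ((p : ℤ)) ^ k ∣ b ^ 2 - m := by
      have := dvd_of_sq_eq hy; push_cast at this; exact this
    obtain ⟨s, hs⟩ := h2
    have hpb : ¬ (p : ℤ) ∣ b := by
      intro hpb
      apply hm
      have h1' : (p : ℤ) ∣ b ^ 2 - m := (dvd_pow_self (p:ℤ) (by omega : k ≠ 0)).trans ⟨s, hs⟩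
      have : (p : ℤ) ∣ b ^ 2 := by rw [sq]; exact hpb.mul_left b
      simpa using dvd_sub this h1'
    have hp2b : ¬ (p : ℤ) ∣ 2 * b := fun h => ((hpz.dvd_mul.mp h).elim hp2' hpb)
    haveI : Fact p.Prime := ⟨hp⟩
    have hne : (2 * ((b : ℤ) : ZMod p)) ≠ 0 := by
      have h0 : ((2 * b : ℤ) : ZMod p) ≠ 0 := by
        rw [Ne, ZMod.intCast_zmod_eq_zero_iff_dvd]; exact hp2b
      push_cast at h0
      exact h0
    have hinv : (p : ℤ) ∣ 2 * b * ((((2 * b : ℤ) : ZMod p))⁻¹.val : ℤ) - 1 := by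
      rw [← ZMod.intCast_zmod_eq_zero_iff_dvd]
      push_cast
      rw [ZMod.natCast_val, ZMod.cast_id, mul_inv_cancel₀ hne, sub_self]
    set u : ℤ := ((((2 * b : ℤ) : ZMod p))⁻¹.val : ℤ) with hu
    obtain ⟨w, hw⟩ := hinv
    set T : ℤ := b + p ^ k * (-s * u) with hT
    refine ⟨⟨((T : ℤ) : ZMod (p ^ (k + 1))), ?_⟩, ?_⟩
    · rw [← Int.cast_pow, ← sub_eq_zero, ← Int.cast_sub, ZMod.intCast_zmod_eq_zero_iff_dvd]
      push_cast
      refine ⟨-(s * w) + p ^ j * s ^ 2 * u ^ 2, ?_⟩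
      rw [hT, hkdef]
      linear_combination hs - ((p:ℤ) ^ (j + 1) * s) * hw
    · apply Subtype.ext
      show r _ = y
      rw [map_intCast, hT]
      push_cast
      have hz : ((p : ZMod (p ^ k))) ^ k = 0 := by
        rw [← Nat.cast_pow, ZMod.natCast_self]
      rw [hz]
      simp [hb, ZMod.natCast_val, ZMod.cast_id]

lemma card_sq_pow {p : ℕ} (hp : p.Prime) (hp2 : p ≠ 2) {m : ℤ} (hm : ¬(p : ℤ) ∣ m)
    {n : ℕ} (hn : 1 ≤ n) :
    Nat.card {x : ZMod (p ^ n) // x ^ 2 = (m : ZMod (p ^ n))} =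
      Nat.card {x : ZMod p // x ^ 2 = (m : ZMod p)} := by
  induction n with
  | zero => omega
  | succ n ih =>
    rcases Nat.eq_or_lt_of_le hn with h1 | h1
    · have h2 : n = 0 := by omega
      subst h2
      rw [pow_one]
    · have hn' : 1 ≤ n := by omega
      rw [hensel_step hp hp2 hm hn', ih hn']

lemma card_sq_prime {p : ℕ} [hfp : Fact p.Prime] (hp2 : p ≠ 2) (m : ℤ) :
    (Nat.card {x : ZMod p // x ^ 2 = (m : ZMod p)} : ℤ) = 1 + jacobiSym m p := by
  classical
  have h := legendreSym.card_sqrts (p := p) hp2 m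
  rw [← jacobiSym.legendreSym.to_jacobiSym p m, add_comm, ← h, Nat.card_eq_fintype_card,
    Set.toFinset_card]
  norm_cast

lemma rhs_prime_pow (m : ℤ) {p : ℕ} (hp : p.Prime) {n : ℕ} (hn : 1 ≤ n) :
    ∑ d ∈ (p ^ n).divisors, (ArithmeticFunction.moebius d : ℤ) ^ 2 * jacobiSym m d =
      1 + jacobiSym m p := by
  rw [Nat.divisors_prime_pow hp, Finset.sum_map]
  simp only [Function.Embedding.coeFn_mk]
  rw [← Finset.sum_range_add_sum_Ico _ (show 2 ≤ n + 1 by omega)]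
  have hz : ∑ i ∈ Finset.Ico 2 (n + 1),
      (ArithmeticFunction.moebius (p ^ i) : ℤ) ^ 2 * jacobiSym m (p ^ i) = 0 := by
    apply Finset.sum_eq_zero
    intro i hi
    rw [Finset.mem_Ico] at hi
    rw [ArithmeticFunction.moebius_apply_prime_pow hp (by omega : i ≠ 0),
      if_neg (by omega : i ≠ 1)]
    ring
  rw [hz, add_zero, Finset.sum_range_succ, Finset.sum_range_one, pow_zero, pow_one,
    ArithmeticFunction.moebius_apply_one, ArithmeticFunction.moebius_apply_prime hp,
    jacobiSym.one_right]
  ring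

lemma rhs_mult (m : ℤ) {a b : ℕ} (hab : a.Coprime b) :
    ∑ d ∈ (a * b).divisors, (ArithmeticFunction.moebius d : ℤ) ^ 2 * jacobiSym m d =
      (∑ d ∈ a.divisors, (ArithmeticFunction.moebius d : ℤ) ^ 2 * jacobiSym m d) *
        ∑ d ∈ b.divisors, (ArithmeticFunction.moebius d : ℤ) ^ 2 * jacobiSym m d := by
  classical
  set F : ArithmeticFunction ℤ :=
    ⟨fun d => (ArithmeticFunction.moebius d : ℤ) ^ 2 * jacobiSym m d, by simp⟩ with hF
  have hFapp : ∀ d, F d = (ArithmeticFunction.moebius d : ℤ) ^ 2 * jacobiSym m d :=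
    fun d => rfl
  have hFmult : F.IsMultiplicative := by
    constructor
    · simp [hFapp]
    · intro x y hxy
      rcases eq_or_ne x 0 with rfl | hx
      · have : y = 1 := by simpa using hxy
        subst this
        simp [hFapp]
      rcases eq_or_ne y 0 with rfl | hy
      · have : x = 1 := by simpa using hxy
        subst this
        simp [hFapp]
      rw [hFapp, hFapp, hFapp, ArithmeticFunction.isMultiplicative_moebius.map_mul_of_coprime hxy,
        jacobiSym.mul_right' m hx hy]
      ring
  have key := (hFmult.mul ArithmeticFunction.isMultiplicative_zeta.natCast).map_mul_of_coprime hab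
  simp only [ArithmeticFunction.coe_mul_zeta_apply, hFapp] at key
  exact key

/-- For `t` a positive odd integer coprime to `2m`, the number of residues `n` mod `t²`
with `n² ≡ m (mod t²)` equals `Σ_{d ∣ t} μ(d)²·(m/d)` (Jacobi symbols). -/
theorem stmt_7 (m : ℤ) (t : ℕ) (ht : 0 < t) (hcop : Int.gcd (2 * m) (t : ℤ) = 1) :
    (Nat.card {n : ZMod (t ^ 2) // n ^ 2 = (m : ZMod (t ^ 2))} : ℤ) =
      ∑ d ∈ t.divisors, (ArithmeticFunction.moebius d : ℤ) ^ 2 * jacobiSym m d := by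
  revert ht hcop
  induction t using Nat.recOnPosPrimePosCoprime with
  | zero => intro ht; omega
  | one =>
    intro _ _
    rw [show (1 : ℕ) ^ 2 = 1 from rfl]
    haveI : Unique {x : ZMod 1 // x ^ 2 = (m : ZMod 1)} :=
      ⟨⟨⟨0, Subsingleton.elim _ _⟩⟩, fun x => Subtype.ext (Subsingleton.elim _ _)⟩
    rw [Nat.card_unique]
    simp
  | prime_pow p n hpp hn =>
    intro _ hcop
    have hpp' : p.Prime := hpp
    haveI : Fact p.Prime := ⟨hpp'⟩
    have hco : IsCoprime (2 * m) ((p : ℤ)) := by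
      have h0 : IsCoprime (2 * m) ((p : ℤ) ^ n) := by
        rw [Int.isCoprime_iff_gcd_eq_one]
        push_cast at hcop ⊢
        exact_mod_cast hcop
      exact IsCoprime.of_isCoprime_of_dvd_right h0 (dvd_pow_self _ hn.ne')
    have hpm2 : ¬ (p : ℤ) ∣ 2 * m := fun h =>
      (Nat.prime_iff_prime_int.mp hpp').not_unit (hco.isUnit_of_dvd' h dvd_rfl)
    have hm : ¬ (p : ℤ) ∣ m := fun h => hpm2 (h.mul_left 2)
    have hp2 : p ≠ 2 := by
      rintro rfl
      exact hpm2 (by push_cast; exact Dvd.intro m rfl)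
    rw [← pow_mul, rhs_prime_pow m hpp' hn]
    rw [card_sq_pow hpp' hp2 hm (by omega : 1 ≤ n * 2), card_sq_prime hp2 m]
  | coprime a b ha1 hb1 hab iha ihb =>
    intro ht hcop
    have hcopa : Int.gcd (2 * m) (a : ℤ) = 1 := by
      have h0 : IsCoprime (2 * m) ((a : ℤ) * b) := by
        rw [Int.isCoprime_iff_gcd_eq_one]
        exact_mod_cast hcop
      rw [← Int.isCoprime_iff_gcd_eq_one]
      exact h0.of_mul_right_left
    have hcopb : Int.gcd (2 * m) (b : ℤ) = 1 := by
      have h0 : IsCoprime (2 * m) ((a : ℤ) * b) := by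
        rw [Int.isCoprime_iff_gcd_eq_one]
        exact_mod_cast hcop
      rw [← Int.isCoprime_iff_gcd_eq_one]
      exact h0.of_mul_right_right
    rw [rhs_mult m hab, ← iha (by omega) hcopa, ← ihb (by omega) hcopb]
    rw [mul_pow, card_sq_mul m (Nat.Coprime.pow 2 2 hab)]
    push_cast
    ring
end

section
/- Let g ≥ 4 with g ≡ 2 (mod 4), and let k = g/2 (so k is odd). If a finite abelian group G contains an element of order 2k, then G contains an element of order g; conversely, if D ≥ 63 is squarefree with at least two odd prime factors and t²D = m^k - n² with gcd(m,2n)=1, m^k < (D+1)², then Cl(-D) contains an element of order g = 2k. -/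
open NumberField

set_option maxHeartbeats 1000000
open scoped nonZeroDivisors


lemma rat_is_int {D : ℕ} (hsf : Squarefree D) (hD : 0 < D) (s : ℚ)
    (w v : ℤ) (hw : (D:ℚ) * s = w) (hv : (D:ℚ) * s^2 = v) : ∃ z : ℤ, s = (z:ℚ) := by
  have hDQ : (D:ℚ) ≠ 0 := by exact_mod_cast hD.ne'
  have hs : s = (w:ℚ) / D := by field_simp; linarith [hw]
  have hw2 : (w:ℚ)^2 = (v:ℚ) * D := by
    rw [hs] at hv; field_simp at hv
    have h4 : (D:ℚ) * (w:ℚ)^2 = (D:ℚ) * ((v:ℚ)*D) := by rw [hv]; ring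
    exact mul_left_cancel₀ hDQ h4
  have hZ : w^2 = v * (D:ℤ) := by exact_mod_cast hw2
  have hdvd : (D:ℤ) ∣ w := by
    have h2 : (D:ℤ) ∣ w^2 := ⟨v, by linarith [hZ]⟩
    exact ((Int.squarefree_natCast.2 hsf).dvd_pow_iff_dvd two_ne_zero).1 h2
  obtain ⟨z, hz⟩ := hdvd
  refine ⟨z, ?_⟩
  rw [hs, hz]; push_cast; field_simp

variable {K : Type} [Field K] [NumberField K]

lemma quad_basis {α : K} {D : ℕ} (hD : 0 < D) (hα : α ^ 2 = -(D:K))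
    (hrank : Module.finrank ℚ K = 2) :
    ∃ b : Module.Basis (Fin 2) ℚ K, b 0 = 1 ∧ b 1 = α := by
  have hαQ : ∀ q : ℚ, algebraMap ℚ K q ≠ α := by
    intro q hq
    have h2 : algebraMap ℚ K (q^2) = algebraMap ℚ K (-(D:ℚ)) := by
      rw [map_pow, hq, hα]; push_cast; ring
    have h3 : (q^2 : ℚ) = -(D:ℚ) := (algebraMap ℚ K).injective h2
    have : (0:ℚ) < D := by exact_mod_cast hD
    nlinarith [sq_nonneg q]
  have hα0 : α ≠ 0 := by
    intro h
    rw [h, zero_pow two_ne_zero] at hα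
    have h1 : (D:K) = 0 := by rw [← neg_eq_zero]; exact hα.symm
    exact hD.ne' (Nat.cast_eq_zero.1 h1)
  have hli : LinearIndependent ℚ ![(1:K), α] := by
    rw [linearIndependent_fin2]
    refine ⟨by simpa using hα0, ?_⟩
    intro a ha
    simp only [Matrix.cons_val_one, Matrix.head_cons, Matrix.cons_val_zero] at ha
    have ha0 : a ≠ 0 := by rintro rfl; simp at ha
    refine hαQ a⁻¹ ?_
    rw [Algebra.algebraMap_eq_smul_one, ← ha, smul_smul, inv_mul_cancel₀ ha0, one_smul]
  refine ⟨basisOfLinearIndependentOfCardEqFinrank hli (by simp [hrank]), ?_, ?_⟩ <;>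
    rw [coe_basisOfLinearIndependentOfCardEqFinrank] <;> simp

lemma quad_norm_trace {α : K} {D : ℕ} (b : Module.Basis (Fin 2) ℚ K) (hb0 : b 0 = 1) (hb1 : b 1 = α)
    (hα : α ^ 2 = -(D:K)) (a c : ℚ) :
    Algebra.norm ℚ (algebraMap ℚ K a + c • α) = a^2 + D*c^2 ∧
    Algebra.trace ℚ K (algebraMap ℚ K a + c • α) = 2*a := by
  have hcomb : ∀ a c : ℚ, algebraMap ℚ K a + c • α = a • b 0 + c • b 1 := by
    intro a c; rw [hb0, hb1, Algebra.algebraMap_eq_smul_one]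
  have hr0 : ∀ a c : ℚ, b.repr (a • b 0 + c • b 1) 0 = a := by
    intro a c
    rw [map_add, map_smul, map_smul, Module.Basis.repr_self, Module.Basis.repr_self]
    simp
  have hr1 : ∀ a c : ℚ, b.repr (a • b 0 + c • b 1) 1 = c := by
    intro a c
    rw [map_add, map_smul, map_smul, Module.Basis.repr_self, Module.Basis.repr_self]
    simp
  have hx0 : (algebraMap ℚ K a + c • α) * b 0 = a • b 0 + c • b 1 := by
    conv_lhs => rw [hb0, mul_one]
    exact hcomb a c
  have hx1 : (algebraMap ℚ K a + c • α) * b 1 = (-(D:ℚ)*c) • b 0 + a • b 1 := by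
    rw [hb1]
    have h1 : (algebraMap ℚ K a + c • α) * α = a • α + c • (α^2) := by
      rw [add_mul, smul_mul_assoc, ← pow_two, Algebra.algebraMap_eq_smul_one, smul_mul_assoc,
        one_mul]
    have h2 : c • (α^2) = (-(D:ℚ)*c) • b 0 := by
      rw [hα, hb0, mul_comm, mul_smul, ← Algebra.algebraMap_eq_smul_one]
      congr 1
      simp
    rw [h1, h2, add_comm]
  have hmat : Algebra.leftMulMatrix b (algebraMap ℚ K a + c • α)
      = !![a, -(D:ℚ)*c; c, a] := by
    ext i j
    rw [Algebra.leftMulMatrix_eq_repr_mul]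
    fin_cases i <;> fin_cases j <;>
      simp only [Fin.zero_eta, Fin.mk_one, hx0, hx1, hr0, hr1, Matrix.cons_val_zero,
        Matrix.cons_val_one, Matrix.head_cons, Matrix.head_fin_const, Matrix.cons_val',
        Matrix.empty_val', Matrix.cons_val_fin_one, Matrix.of_apply]
  constructor
  · rw [Algebra.norm_eq_matrix_det b, hmat, Matrix.det_fin_two_of]; ring
  · rw [Algebra.trace_eq_matrix_trace b, hmat, Matrix.trace_fin_two_of]; ring

lemma norm_intCast (hrank : Module.finrank ℚ K = 2) (c : ℤ) :
    Algebra.norm ℤ ((c : 𝓞 K)) = c^2 := by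
  have h1 : (c : 𝓞 K) = algebraMap ℤ (𝓞 K) c := rfl
  rw [h1, Algebra.norm_algebraMap_of_basis (RingOfIntegers.basis K)]
  congr 1
  rw [← Module.finrank_eq_card_chooseBasisIndex, RingOfIntegers.rank, hrank]

lemma int_coords {α : K} {D : ℕ} (hsf : Squarefree D) (hD : 0 < D) (hα : α ^ 2 = -(D:K))
    (hrank : Module.finrank ℚ K = 2) (α' : 𝓞 K) (hα' : (α' : K) = α) (x : 𝓞 K) :
    ∃ u s : ℤ, 4 * Algebra.norm ℤ x = u^2 + (D:ℤ)*s^2 ∧ (s = 0 → ∃ c : ℤ, x = (c : 𝓞 K)) := by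
  obtain ⟨b, hb0, hb1⟩ := quad_basis hD hα hrank
  -- decompose x
  obtain ⟨a, c, hac⟩ : ∃ a c : ℚ, (x : K) = algebraMap ℚ K a + c • α := by
    refine ⟨b.repr (x:K) 0, b.repr (x:K) 1, ?_⟩
    have := b.sum_repr (x:K)
    rw [Fin.sum_univ_two, hb0, hb1] at this
    rw [Algebra.algebraMap_eq_smul_one]
    exact this.symm
  set T1 : ℤ := Algebra.trace ℤ (𝓞 K) x with hT1def
  have hT1 : (T1:ℚ) = 2*a := by
    rw [hT1def, Algebra.coe_trace_int, hac]
    exact (quad_norm_trace b hb0 hb1 hα a c).2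
  set Nz : ℤ := Algebra.norm ℤ x with hNzdef
  have hNQ : (Nz:ℚ) = a^2 + D*c^2 := by
    rw [hNzdef, Algebra.coe_norm_int, hac]
    exact (quad_norm_trace b hb0 hb1 hα a c).1
  set y : 𝓞 K := x * α' with hydef
  have hyK : (y : K) = algebraMap ℚ K (-(D:ℚ)*c) + a • α := by
    have hcoe : (y : K) = (x : K) * α := by rw [hydef]; push_cast [hα']; ring
    rw [hcoe, hac, add_mul, Algebra.algebraMap_eq_smul_one, smul_mul_assoc,
      one_mul, smul_mul_assoc, ← pow_two, hα]
    have h3 : c • (-(D:K)) = algebraMap ℚ K (-(D:ℚ)*c) := by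
      rw [Algebra.algebraMap_eq_smul_one, mul_comm, mul_smul]
      congr 1
      rw [Rat.smul_one_eq_cast]
      push_cast
      ring
    rw [h3, add_comm]
  set T2 : ℤ := Algebra.trace ℤ (𝓞 K) y with hT2def
  have hT2 : (T2:ℚ) = 2*(-(D:ℚ)*c) := by
    rw [hT2def, Algebra.coe_trace_int, hyK]
    exact (quad_norm_trace b hb0 hb1 hα _ a).2
  -- apply rat_is_int to s' = 2c
  have hw : (D:ℚ) * (2*c) = ((-T2 : ℤ) : ℚ) := by push_cast; linarith [hT2]
  have hv : (D:ℚ) * (2*c)^2 = ((4*Nz - T1^2 : ℤ) : ℚ) := by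
    have h4 : (T1:ℚ)^2 = 4*a^2 := by rw [hT1]; ring
    push_cast
    rw [h4, hNQ]; ring
  obtain ⟨S, hS⟩ := rat_is_int hsf hD (2*c) _ _ hw hv
  refine ⟨T1, S, ?_, ?_⟩
  · have : ((4 * Nz : ℤ) : ℚ) = ((T1^2 + (D:ℤ)*S^2 : ℤ) : ℚ) := by
      push_cast
      rw [hNQ, hT1, ← hS]; ring
    exact_mod_cast this
  · intro hS0
    have hc0 : c = 0 := by rw [hS0] at hS; push_cast at hS; linarith [hS]
    have hxa : (x : K) = algebraMap ℚ K a := by rw [hac, hc0, zero_smul, add_zero]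
    have hint : IsIntegral ℤ ((x : K)) := RingOfIntegers.isIntegral_coe x
    rw [hxa] at hint
    have hia : IsIntegral ℤ a := by
      rwa [isIntegral_algebraMap_iff (algebraMap ℚ K).injective] at hint
    obtain ⟨c0, hc0'⟩ := IsIntegrallyClosed.isIntegral_iff.1 hia
    refine ⟨c0, ?_⟩
    have : ((c0 : 𝓞 K) : K) = (x : K) := by
      push_cast
      rw [hxa, ← hc0']
      simp [Algebra.algebraMap_eq_smul_one]
    exact_mod_cast this.symm

lemma norm_natCast' (hrank : Module.finrank ℚ K = 2) (c : ℕ) :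
    Algebra.norm ℤ ((c : 𝓞 K)) = (c:ℤ)^2 := by
  have h1 : ((c:ℕ) : 𝓞 K) = ((c:ℤ) : 𝓞 K) := by push_cast; ring
  rw [h1, norm_intCast hrank]

lemma coe_pow_sq {α : K} {D : ℕ} (hα : α ^ 2 = -(D:K)) (α' : 𝓞 K) (hα' : (α' : K) = α) :
    α' ^ 2 = -(D : 𝓞 K) := by
  have h : ((α' ^ 2 : 𝓞 K) : K) = ((-(D:ℕ) : 𝓞 K) : K) := by push_cast [hα']; exact hα
  exact_mod_cast h

lemma order_two {α : K} {D : ℕ} (hD : 63 ≤ D) (hsf : Squarefree D)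
    (p q : ℕ) (hp : p.Prime) (hq : q.Prime) (hop : Odd p) (hoq : Odd q) (hne : p ≠ q)
    (hpD : p ∣ D) (hqD : q ∣ D)
    (hα : α ^ 2 = -(D:K)) (hrank : Module.finrank ℚ K = 2)
    (α' : 𝓞 K) (hα' : (α' : K) = α) :
    ∃ c : ClassGroup (𝓞 K), orderOf c = 2 := by
  have hD0 : 0 < D := by omega
  have hα'sq : α' ^ 2 = -(D : 𝓞 K) := coe_pow_sq hα α' hα'
  have hpd : (D : 𝓞 K) = (p : 𝓞 K) * ((D / p : ℕ) : 𝓞 K) := by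
    rw [← Nat.cast_mul]
    exact_mod_cast congrArg (Nat.cast : ℕ → 𝓞 K) (Nat.mul_div_cancel' hpD).symm
  set P : Ideal (𝓞 K) := Ideal.span {((p:ℕ) : 𝓞 K), α'} with hPdef
  have hpmem : ((p:ℕ) : 𝓞 K) ∈ P := Ideal.subset_span (by simp)
  have hamem : α' ∈ P := Ideal.subset_span (by simp)
  have hP2 : P ^ 2 = Ideal.span {((p:ℕ) : 𝓞 K)} := by
    rw [pow_two]
    apply le_antisymm
    · rw [Ideal.mul_le]
      intro r hr s hs
      rw [hPdef, Ideal.mem_span_pair] at hr hs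
      obtain ⟨a₁, b₁, h₁⟩ := hr
      obtain ⟨a₂, b₂, h₂⟩ := hs
      rw [Ideal.mem_span_singleton]
      refine ⟨a₁*a₂*(p:𝓞 K) + a₁*b₂*α' + b₁*a₂*α' - b₁*b₂*((D/p : ℕ) : 𝓞 K), ?_⟩
      rw [← h₁, ← h₂]
      linear_combination (b₁*b₂) * hα'sq - (b₁*b₂) * hpd
    · rw [Ideal.span_le, Set.singleton_subset_iff]
      have h1 : ((p:ℕ) : 𝓞 K)^2 ∈ P * P := by
        rw [pow_two]; exact Ideal.mul_mem_mul hpmem hpmem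
      have h2 : ((D:ℕ) : 𝓞 K) ∈ P * P := by
        have h3 : α' * α' ∈ P * P := Ideal.mul_mem_mul hamem hamem
        have h4 : α' * α' = -((D:ℕ) : 𝓞 K) := by rw [← pow_two]; exact hα'sq
        rw [h4] at h3
        simpa using (P*P).neg_mem h3
      -- Bezout: p = a*p^2 + b*D over ℤ
      have hcop : Nat.Coprime p (D / p) := by
        refine (Nat.Prime.coprime_iff_not_dvd hp).2 ?_
        intro hdvd
        have : p * p ∣ D := by
          calc p * p ∣ p * (D / p) := mul_dvd_mul_left p hdvd
          _ = D := Nat.mul_div_cancel' hpD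
        exact hp.ne_one (Nat.isUnit_iff.1 (hsf p this))
      obtain ⟨x, y, hbez⟩ : ∃ x y : ℤ, (p:ℤ) = x*(p:ℤ)^2 + y*(D:ℤ) := by
        have h5 := Nat.gcd_eq_gcd_ab p (D / p)
        rw [Nat.Coprime] at hcop
        rw [hcop] at h5
        refine ⟨Nat.gcdA p (D/p), Nat.gcdB p (D/p), ?_⟩
        have h6 : (D:ℤ) = (p:ℤ) * ((D/p : ℕ) : ℤ) := by
          exact_mod_cast congrArg (Nat.cast : ℕ → ℤ) (Nat.mul_div_cancel' hpD).symm
        rw [h6]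
        push_cast at h5 ⊢
        nlinarith [h5]
      have hbez' : ((p:ℕ) : 𝓞 K) = (x : 𝓞 K)*((p:ℕ) : 𝓞 K)^2 + (y : 𝓞 K)*((D:ℕ) : 𝓞 K) := by
        exact_mod_cast congrArg (Int.cast : ℤ → 𝓞 K) hbez
      rw [hbez']
      exact Ideal.add_mem _ (Ideal.mul_mem_left _ _ h1) (Ideal.mul_mem_left _ _ h2)
  have habsP : Ideal.absNorm P = p := by
    have h7 : Ideal.absNorm P ^ 2 = p ^ 2 := by
      rw [← map_pow, hP2, Ideal.absNorm_span_singleton, norm_natCast' hrank]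
      simp [Int.natAbs_pow]
    exact Nat.pow_left_injective (by norm_num) h7
  have hPbot : P ≠ ⊥ := by
    intro h
    rw [h] at hpmem
    have : ((p:ℕ) : 𝓞 K) = 0 := by simpa using hpmem
    exact hp.pos.ne' (by exact_mod_cast this)
  have hPnp : ¬ P.IsPrincipal := by
    rintro ⟨y0, hy0⟩
    have habs : (Algebra.norm ℤ y0).natAbs = p := by
      rw [hy0, Ideal.submodule_span_eq] at habsP
      rwa [Ideal.absNorm_span_singleton] at habsP
    obtain ⟨u, s, hus, hs0⟩ := int_coords hsf hD0 hα hrank α' hα' y0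
    have hNnn : 0 ≤ Algebra.norm ℤ y0 := by nlinarith [sq_nonneg u, sq_nonneg s, hus]
    have hNp : Algebra.norm ℤ y0 = (p:ℤ) := by
      rw [← Int.natAbs_of_nonneg hNnn, habs]
    rw [hNp] at hus
    by_cases hs : s = 0
    · obtain ⟨c, hc⟩ := hs0 hs
      have : (c:ℤ)^2 = (p:ℤ) := by rw [← hNp, hc, norm_intCast hrank]
      have hcp : c.natAbs * c.natAbs = p := by
        have := congrArg Int.natAbs this
        rwa [Int.natAbs_pow, Int.natAbs_natCast, pow_two] at this
      rcases (Nat.Prime.eq_one_or_self_of_dvd hp c.natAbs ⟨c.natAbs, hcp.symm⟩) with h | h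
      · rw [h] at hcp; have := hp.two_le; omega
      · rw [h] at hcp; nlinarith [hp.two_le]
    · have hs2 : 1 ≤ s^2 := by rcases lt_or_gt_of_ne hs with h | h <;> nlinarith
      have h3p : 3 * p ≤ D := by
        have hqne2 : q ≠ 2 := by rintro rfl; exact (by decide : ¬ Odd 2) hoq
        have hq3 : 3 ≤ q := by have := hq.two_le; omega
        have hpq : p * q ∣ D :=
          Nat.Coprime.mul_dvd_of_dvd_of_dvd ((Nat.coprime_primes hp hq).2 hne) hpD hqD
        calc 3 * p ≤ q * p := by exact Nat.mul_le_mul_right p hq3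
        _ = p * q := mul_comm q p
        _ ≤ D := Nat.le_of_dvd hD0 hpq
      have h3p' : 3 * (p:ℤ) ≤ (D:ℤ) := by exact_mod_cast h3p
      have hs1 : s^2 = 1 := by nlinarith [sq_nonneg u, sq_nonneg s, hus]
      have hu2 : u^2 = 4*(p:ℤ) - (D:ℤ) := by nlinarith [hus, hs1]
      have hpu : (p:ℤ) ∣ u := by
        have h8 : (p:ℤ) ∣ u^2 := by
          have : (p:ℤ) ∣ (D:ℤ) := by exact_mod_cast hpD
          obtain ⟨e, he⟩ := this
          exact ⟨4 - e, by rw [hu2, he]; ring⟩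
        exact (Int.prime_iff_natAbs_prime.2 (by simpa using hp)).dvd_of_dvd_pow h8
      obtain ⟨u', hu'⟩ := hpu
      by_cases hu0 : u' = 0
      · have hD4 : (D:ℤ) = 4 * (p:ℤ) := by rw [hu0] at hu'; nlinarith [hu2, hu']
        have : D = 4 * p := by exact_mod_cast hD4
        have h4D : 2 * 2 ∣ D := ⟨p, by omega⟩
        exact (by norm_num : ¬ IsUnit (2:ℕ)) (hsf 2 h4D)
      · have h11 : 1 ≤ u'^2 := by rcases lt_or_gt_of_ne hu0 with h | h <;> nlinarith
        have hpz : (2:ℤ) ≤ (p:ℤ) := by exact_mod_cast hp.two_le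
        have h10 : u^2 = (p:ℤ)^2*u'^2 := by rw [hu']; ring
        have h9 : (p:ℤ)^2 ≤ (p:ℤ)^2 * u'^2 := by nlinarith [sq_nonneg (p:ℤ)]
        nlinarith
  -- build class group element
  have hPmem : P ∈ (Ideal (𝓞 K))⁰ := mem_nonZeroDivisors_of_ne_zero hPbot
  set cl : ClassGroup (𝓞 K) := ClassGroup.mk0 ⟨P, hPmem⟩ with hcl
  have hcl2 : cl ^ 2 = 1 := by
    rw [hcl, ← map_pow]
    have hpow : (⟨P, hPmem⟩ : (Ideal (𝓞 K))⁰) ^ 2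
        = ⟨P ^ 2, pow_mem hPmem 2⟩ := by
      ext; simp
    rw [hpow]
    rw [ClassGroup.mk0_eq_one_iff]
    rw [hP2]
    exact ⟨((p:ℕ) : 𝓞 K), rfl⟩
  have hclne : cl ≠ 1 := by
    rw [hcl, Ne, ClassGroup.mk0_eq_one_iff]
    exact hPnp
  exact ⟨cl, orderOf_eq_prime hcl2 hclne⟩

lemma order_k {α : K} {D m n t k : ℕ} (hD : 63 ≤ D) (hsf : Squarefree D)
    (hk3 : 3 ≤ k) (hkodd : k % 2 = 1)
    (hn : 0 < n) (ht : 0 < t)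
    (hdiop : (t:ℤ)^2 * (D:ℤ) = (m:ℤ)^k - (n:ℤ)^2)
    (hgcd : Nat.gcd m (2*n) = 1) (hmk : m^k < (D+1)^2)
    (hα : α ^ 2 = -(D:K)) (hrank : Module.finrank ℚ K = 2)
    (α' : 𝓞 K) (hα' : (α' : K) = α) :
    ∃ c : ClassGroup (𝓞 K), orderOf c = k := by
  have hD0 : 0 < D := by omega
  have hα'sq : α' ^ 2 = -(D : 𝓞 K) := coe_pow_sq hα α' hα'
  obtain ⟨b, hb0, hb1⟩ := quad_basis hD0 hα hrank
  have hnat : m ^ k = n ^ 2 + t ^ 2 * D := by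
    have h1 : (m:ℤ)^k = (n:ℤ)^2 + (t:ℤ)^2*(D:ℤ) := by linarith [hdiop]
    exact_mod_cast h1
  have h64 : 64 ≤ m ^ k := by
    have h2 : 1 ≤ n^2 := Nat.one_le_pow _ _ hn
    have h3 : 63 ≤ t^2*D := le_trans (by omega) (Nat.mul_le_mul (Nat.one_le_pow _ _ ht) hD)
    omega
  have hm2 : 2 ≤ m := by
    by_contra h
    have : m ^ k ≤ 1 ^ k := Nat.pow_le_pow_left (by omega) k
    simp at this; omega
  set ξ : 𝓞 K := (n : 𝓞 K) + (t : 𝓞 K) * α' with hξ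
  set η : 𝓞 K := (n : 𝓞 K) - (t : 𝓞 K) * α' with hη
  set A : Ideal (𝓞 K) := Ideal.span {ξ} with hA
  set B : Ideal (𝓞 K) := Ideal.span {η} with hB
  have hprod : ξ * η = ((m^k : ℕ) : 𝓞 K) := by
    have h4 : ((m^k : ℕ) : 𝓞 K) = (n : 𝓞 K)^2 + (t : 𝓞 K)^2 * (D : 𝓞 K) := by
      rw [hnat]; push_cast; ring
    rw [hξ, hη, h4]
    linear_combination (-(t:𝓞 K)^2) * hα'sq
  have hAB : A * B = (Ideal.span {((m:ℕ) : 𝓞 K)}) ^ k := by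
    rw [hA, hB, Ideal.span_singleton_mul_span_singleton, hprod, Ideal.span_singleton_pow]
    norm_cast
  have hnormξ : Algebra.norm ℤ ξ = ((m^k : ℕ) : ℤ) := by
    have hξK : (ξ : K) = algebraMap ℚ K (n:ℚ) + (t:ℚ) • α := by
      rw [hξ]; push_cast [hα']
      rw [Algebra.smul_def]
      simp
    have h5 : ((Algebra.norm ℤ ξ : ℤ) : ℚ) = ((n:ℚ))^2 + (D:ℚ)*((t:ℚ))^2 := by
      rw [Algebra.coe_norm_int, hξK]
      exact (quad_norm_trace b hb0 hb1 hα (n:ℚ) (t:ℚ)).1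
    have h6 : ((n:ℚ))^2 + (D:ℚ)*((t:ℚ))^2 = ((m^k : ℕ) : ℚ) := by
      rw [hnat]; push_cast; ring
    rw [h6] at h5
    exact_mod_cast h5
  have habsA : Ideal.absNorm A = m^k := by
    rw [hA, Ideal.absNorm_span_singleton, hnormξ]
    exact Int.natAbs_natCast _
  have hsup : A ⊔ B = ⊤ := by
    rw [Ideal.eq_top_iff_one]
    have hcop : Nat.Coprime (m^k) (2*n) := (Nat.Coprime.pow_left k hgcd)
    have hbez := Nat.gcd_eq_gcd_ab (m^k) (2*n)
    rw [Nat.Coprime] at hcop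
    rw [hcop] at hbez
    have hmem1 : ((m^k : ℕ) : 𝓞 K) ∈ A ⊔ B := by
      apply Submodule.mem_sup_left
      rw [hA, Ideal.mem_span_singleton]
      exact ⟨η, hprod.symm⟩
    have hmem2 : ((2*n : ℕ) : 𝓞 K) ∈ A ⊔ B := by
      have h7 : ((2*n : ℕ) : 𝓞 K) = ξ + η := by rw [hξ, hη]; push_cast; ring
      rw [h7]
      exact Submodule.add_mem _
        (Submodule.mem_sup_left (Ideal.subset_span rfl))
        (Submodule.mem_sup_right (Ideal.subset_span rfl))
    have h8 : (1 : 𝓞 K) = ((Nat.gcdA (m^k) (2*n) : ℤ) : 𝓞 K) * ((m^k : ℕ) : 𝓞 K)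
        + ((Nat.gcdB (m^k) (2*n) : ℤ) : 𝓞 K) * ((2*n : ℕ) : 𝓞 K) := by
      have := congrArg (Int.cast : ℤ → 𝓞 K) hbez
      push_cast at this ⊢
      linear_combination this
    rw [h8]
    exact Submodule.add_mem _ (Ideal.mul_mem_left _ _ hmem1) (Ideal.mul_mem_left _ _ hmem2)
  have hunit : IsUnit (gcd A B) := by
    rw [Ideal.isUnit_iff, Ideal.gcd_eq_sup, hsup]
  obtain ⟨𝔞, h𝔞⟩ := exists_associated_pow_of_mul_eq_pow hunit hAB
  have h𝔞k : 𝔞 ^ k = A := associated_iff_eq.1 h𝔞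
  have habs𝔞 : Ideal.absNorm 𝔞 = m := by
    have h9 : Ideal.absNorm 𝔞 ^ k = m ^ k := by rw [← map_pow, h𝔞k, habsA]
    exact Nat.pow_left_injective (by omega) h9
  have h𝔞0 : 𝔞 ≠ 0 := by
    intro h
    rw [h] at habs𝔞
    simp [Ideal.absNorm_bot] at habs𝔞
    omega
  have h𝔞mem : 𝔞 ∈ (Ideal (𝓞 K))⁰ := mem_nonZeroDivisors_of_ne_zero h𝔞0
  set cl : ClassGroup (𝓞 K) := ClassGroup.mk0 ⟨𝔞, h𝔞mem⟩ with hcl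
  have hpowlem : ∀ j : ℕ, (⟨𝔞, h𝔞mem⟩ : (Ideal (𝓞 K))⁰) ^ j = ⟨𝔞 ^ j, pow_mem h𝔞mem j⟩ := by
    intro j; ext; simp
  have hclk : cl ^ k = 1 := by
    rw [hcl, ← map_pow, hpowlem, ClassGroup.mk0_eq_one_iff, h𝔞k, hA]
    exact ⟨ξ, rfl⟩
  have hdk : orderOf cl ∣ k := orderOf_dvd_of_pow_eq_one hclk
  refine ⟨cl, ?_⟩
  by_contra hne
  set d := orderOf cl with hd
  have hd0 : 0 < d := orderOf_pos cl
  obtain ⟨e, he⟩ := hdk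
  have he0 : e ≠ 0 := by rintro rfl; omega
  have he1 : e ≠ 1 := by rintro rfl; rw [mul_one] at he; exact hne he.symm
  have heodd : e % 2 = 1 := by
    rcases Nat.even_or_odd e with hev | hod
    · exfalso
      have hkev : Even k := by rw [he]; exact hev.mul_left d
      obtain ⟨r, hr⟩ := hkev
      omega
    · obtain ⟨r, hr⟩ := hod
      omega
  have he3 : 3 ≤ e := by omega
  have h3d : 3 * d ≤ k := by
    calc 3 * d = d * 3 := by ring
    _ ≤ d * e := Nat.mul_le_mul_left d he3
    _ = k := he.symm
  have hprin : (𝔞 ^ d).IsPrincipal := by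
    have h10 : cl ^ d = 1 := pow_orderOf_eq_one cl
    rw [hcl, ← map_pow, hpowlem] at h10
    exact (ClassGroup.mk0_eq_one_iff _).1 h10
  obtain ⟨x, hx⟩ := hprin
  have habsx : (Algebra.norm ℤ x).natAbs = m ^ d := by
    have h11 : Ideal.absNorm (𝔞 ^ d) = m ^ d := by rw [map_pow, habs𝔞]
    rw [hx, Ideal.submodule_span_eq, Ideal.absNorm_span_singleton] at h11
    exact h11
  obtain ⟨u, s, hus, hs0⟩ := int_coords hsf hD0 hα hrank α' hα' x
  have hNnn : 0 ≤ Algebra.norm ℤ x := by nlinarith [sq_nonneg u, sq_nonneg s, hus]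
  have hNx : Algebra.norm ℤ x = ((m^d : ℕ) : ℤ) := by
    rw [← Int.natAbs_of_nonneg hNnn, habsx]
  rw [hNx] at hus
  by_cases hs : s = 0
  · -- x is a rational integer: contradiction via conjugate generator
    obtain ⟨c, hc⟩ := hs0 hs
    set C : 𝓞 K := ((c^e : ℤ) : 𝓞 K) with hC
    have hxc : x ^ e = C := by rw [hc, hC]; push_cast; ring
    have hAC : A = Ideal.span {C} := by
      rw [← h𝔞k, he, pow_mul, hx, Ideal.submodule_span_eq, Ideal.span_singleton_pow, hxc]
    have hc0 : c ≠ 0 := by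
      rintro rfl
      have hbot : 𝔞 ^ d = ⊥ := by
        rw [hx, Ideal.submodule_span_eq, hc]
        simp
      exact h𝔞0 ((pow_eq_zero_iff hd0.ne').1 hbot)
    have hCne : C ≠ 0 := by
      rw [hC]
      exact_mod_cast pow_ne_zero e hc0
    have hC2 : ((c^e : ℤ))^2 = ((m^k : ℕ) : ℤ) := by
      have h12 : Ideal.absNorm A = (Algebra.norm ℤ C).natAbs := by
        rw [hAC, Ideal.absNorm_span_singleton]
      rw [habsA, hC, norm_intCast hrank] at h12
      have h13 : (((c^e : ℤ))^2).natAbs = m^k := h12.symm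
      rw [← Int.natAbs_of_nonneg (sq_nonneg ((c^e : ℤ))), h13]
    have hM2 : ((m^k : ℕ) : 𝓞 K) = C^2 := by
      rw [hC]
      exact_mod_cast congrArg (Int.cast : ℤ → 𝓞 K) hC2.symm
    have hassoc : Associated ξ C := by
      refine Ideal.span_singleton_eq_span_singleton.1 ?_
      rw [← hA, hAC]
    obtain ⟨ν, hν⟩ := id hassoc
    have h16 : C * η = C * ((ν : 𝓞 K) * C) := by
      calc C * η = (ξ * (ν : 𝓞 K)) * η := by rw [hν]
      _ = (ν : 𝓞 K) * (ξ * η) := by ring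
      _ = (ν : 𝓞 K) * C^2 := by rw [hprod, hM2]
      _ = C * ((ν : 𝓞 K) * C) := by ring
    have hηC : η = (ν : 𝓞 K) * C := mul_left_cancel₀ hCne h16
    have hBA : B = A := by
      have hassoc2 : Associated η C := by
        refine Associated.symm ⟨ν, ?_⟩
        rw [mul_comm]
        exact hηC.symm
      rw [hB, hA]
      rw [Ideal.span_singleton_eq_span_singleton.2 hassoc2,
        Ideal.span_singleton_eq_span_singleton.2 hassoc]
    have hAtop : A = ⊤ := by
      have h17 := hsup
      rw [hBA, sup_idem] at h17
      exact h17
    have h18 : Ideal.absNorm A = 1 := by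
      rw [hAtop]
      exact Ideal.absNorm_eq_one_iff.2 rfl
    rw [habsA] at h18
    omega
  · -- s ≠ 0 : size contradiction
    have hs2 : 1 ≤ s^2 := by rcases lt_or_gt_of_ne hs with h | h <;> nlinarith
    have hDm : (D:ℤ) ≤ 4 * ((m^d : ℕ) : ℤ) := by nlinarith [sq_nonneg u]
    have hDmn : D ≤ 4 * m^d := by exact_mod_cast hDm
    set M := m ^ d with hM
    have hM3 : m ^ (3*d) = M^3 := by rw [hM, ← pow_mul, mul_comm 3 d]
    have hup : m ^ (3*d) ≤ m ^ k := Nat.pow_le_pow_right (by omega) h3d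
    have hmk' : m ^ k ≤ D^2 + 2*D := by nlinarith [hmk]
    have hM3D : M^3 ≤ D^2 + 2*D := by rw [← hM3]; omega
    have hD3 : D^3 ≤ 64 * M^3 := by
      calc D^3 ≤ (4*M)^3 := Nat.pow_le_pow_left hDmn 3
      _ = 64 * M^3 := by ring
    rcases Nat.lt_or_ge D 66 with h | h
    · interval_cases D
      · exact absurd (hsf 3 (by norm_num)) (by simp [Nat.isUnit_iff])
      · exact absurd (hsf 2 (by norm_num)) (by simp [Nat.isUnit_iff])
      · have hM17 : 17 ≤ M := by omega
        have : 17^3 ≤ M^3 := Nat.pow_le_pow_left hM17 3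
        omega
    · have h19 : 64*M^3 ≤ 64*(D^2+2*D) := Nat.mul_le_mul_left 64 hM3D
      have h20 : D^3 ≤ 64*D^2 + 128*D := by
        calc D^3 ≤ 64*(D^2+2*D) := le_trans hD3 h19
        _ = 64*D^2 + 128*D := by ring
      have h21 : 66*D^2 ≤ D^3 := by
        calc 66*D^2 ≤ D*D^2 := Nat.mul_le_mul_right _ h
        _ = D^3 := by ring
      have h22 : 66*D ≤ D^2 := by
        calc 66*D ≤ D*D := Nat.mul_le_mul_right _ h
        _ = D^2 := by ring
      linarith [h20, h21, h22, h]

/-- The case `g ≡ 2 (mod 4)`, `g = 2k` with `k` odd: (i) a finite abelian group with an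
element of order `2k` has an element of order `g`; (ii) if `D ≥ 63` is squarefree with at
least two odd prime factors and `t²D = m^k - n²` with `gcd(m, 2n) = 1`, `m^k < (D+1)²`,
then the class group of `ℚ(√-D)` contains an element of order `g = 2k`. -/
theorem stmt_17 (g k : ℕ) (hg : 4 ≤ g) (hmod : g % 4 = 2) (hk : g = 2 * k) :
    (∀ (G : Type) [CommGroup G] [Finite G],
        (∃ x : G, orderOf x = 2 * k) → ∃ x : G, orderOf x = g) ∧
    (∀ (D m n t : ℕ), 63 ≤ D → Squarefree D →
      (∃ p q : ℕ, p.Prime ∧ q.Prime ∧ Odd p ∧ Odd q ∧ p ≠ q ∧ p ∣ D ∧ q ∣ D) →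
      0 < m → 0 < n → 0 < t →
      (t : ℤ) ^ 2 * (D : ℤ) = (m : ℤ) ^ k - (n : ℤ) ^ 2 →
      Nat.gcd m (2 * n) = 1 → m ^ k < (D + 1) ^ 2 →
      ∀ (K : Type) [Field K] [NumberField K] (α : K), α ^ 2 = -(D : K) →
        Module.finrank ℚ K = 2 →
        ∃ c : ClassGroup (𝓞 K), orderOf c = g) := by
  have hkodd : k % 2 = 1 := by omega
  have hk3 : 3 ≤ k := by omega
  constructor
  · intro G _ _ hx
    obtain ⟨x, hx⟩ := hx
    exact ⟨x, by rw [hk]; exact hx⟩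
  · intro D m n t hD hsf hpq hm hn ht hdiop hgcd hmk K _ _ α hα hrank
    obtain ⟨p, q, hp, hq, hop, hoq, hne, hpD, hqD⟩ := hpq
    have hαint : IsIntegral ℤ α := by
      refine ⟨Polynomial.X^2 + Polynomial.C (D:ℤ),
        Polynomial.monic_X_pow_add_C _ two_ne_zero, ?_⟩
      simp [hα]
    set α' : 𝓞 K := ⟨α, hαint⟩ with hα'def
    have hα' : (α' : K) = α := rfl
    obtain ⟨c1, hc1⟩ := order_k hD hsf hk3 hkodd hn ht hdiop hgcd hmk hα hrank α' hα'
    obtain ⟨c2, hc2⟩ := order_two hD hsf p q hp hq hop hoq hne hpD hqD hα hrank α' hα'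
    refine ⟨c1 * c2, ?_⟩
    have hcop : (orderOf c1).Coprime (orderOf c2) := by
      rw [hc1, hc2]
      exact Nat.coprime_comm.1 ((Nat.prime_two.coprime_iff_not_dvd).2 (by omega))
    rw [(Commute.all c1 c2).orderOf_mul_eq_mul_orderOf_of_coprime hcop, hc1, hc2, hk]
    omega
end
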